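/- Let x ∈ I have continued fraction coefficients (a_j)_{j≥1}, let n ≥ 2 be even and let y ∈ I_n(x). Then |f_1(x) − f_1(y)| ≤ 1 / ( a_1² a_3² ⋯ a_{n-1}² ), i.e. |f_1(x) − f_1(y)| ≤ ∏_{j=1}^{n/2} a_{2j-1}^{-2}. -/

import Mathlib

open Filter Finset MeasureTheory
open Topology

/-- `qden a n` is the denominator `q_n` of the continued fraction with partial
quotients `a_1 = a 0, a_2 = a 1, …` (0-indexed sequence `a`), defined by
`q_0 = 1`, `q_1 = a_1`, `q_n = a_n q_{n-1} + q_{n-2}`. -/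
def qden (a : ℕ → ℕ+) : ℕ → ℕ
  | 0 => 1
  | 1 => a 0
  | (n+2) => (a (n+1) : ℕ) * qden a (n+1) + qden a n

/-- `pnum a n` is the numerator `p_n`, defined by `p_0 = 0`, `p_1 = 1`,
`p_n = a_n p_{n-1} + p_{n-2}`. -/
def pnum (a : ℕ → ℕ+) : ℕ → ℕ
  | 0 => 0
  | 1 => 1
  | (n+2) => (a (n+1) : ℕ) * pnum a (n+1) + pnum a n

/-- The value `[a_1, a_2, …]` of the infinite continued fraction with partial quotients
`a_1 = a 0, a_2 = a 1, …`, i.e. the limit of the convergents `p_n / q_n` (which always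
exists). -/
noncomputable def cfVal (a : ℕ → ℕ+) : ℝ :=
  limUnder atTop (fun n => (pnum a n : ℝ) / (qden a n : ℝ))

/-- The set `I` of irrational numbers of `[0,1]`. -/
def Iirr : Set ℝ := {x | x ∈ Set.Icc (0:ℝ) 1 ∧ Irrational x}

/-- The fundamental interval `I_n(x)` of rank `n` for `x = [a_1, a_2, …]`: the set of those
irrationals `y = [b_1, b_2, …]` whose first `n` partial quotients agree with those of `x`. -/
def fundInt (a : ℕ → ℕ+) (n : ℕ) : Set ℝ :=
  {y | ∃ b : ℕ → ℕ+, cfVal b = y ∧ ∀ j < n, b j = a j}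

/-- The (unique) sequence of partial quotients of `x`, when `x` has a continued
fraction expansion. -/
noncomputable def coeff (x : ℝ) : ℕ → ℕ+ := by
  classical
  exact if h : ∃ a : ℕ → ℕ+, cfVal a = x then h.choose else fun _ => 1

/-- First component of Cantor's bijection: `f₁([a_1,a_2,…]) = [a_1,a_3,a_5,…]`. -/
noncomputable def cantorF1 (x : ℝ) : ℝ := cfVal (fun j => coeff x (2*j))

/-- Second component of Cantor's bijection: `f₂([a_1,a_2,…]) = [a_2,a_4,a_6,…]`. -/
noncomputable def cantorF2 (x : ℝ) : ℝ := cfVal (fun j => coeff x (2*j+1))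

namespace CFAux

noncomputable def conv (a : ℕ → ℕ+) (n : ℕ) : ℝ := (pnum a n : ℝ) / (qden a n : ℝ)

lemma qden_pos (a : ℕ → ℕ+) : ∀ n, 0 < qden a n
  | 0 => by simp [qden]
  | 1 => by simpa [qden] using (a 0).pos
  | (n+2) => by
      have h := qden_pos a n
      simp only [qden]
      positivity

lemma qden_le_succ (a : ℕ → ℕ+) : ∀ n, qden a n ≤ qden a (n+1)
  | 0 => by simp [qden]; exact (a 0).one_le
  | (n+1) => by
      have h1 : 1 ≤ (a (n+1) : ℕ) := (a (n+1)).one_le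
      have h2 := qden_pos a n
      calc qden a (n+1) = 1 * qden a (n+1) := (one_mul _).symm
        _ ≤ (a (n+1) : ℕ) * qden a (n+1) + qden a n := by
            have := Nat.mul_le_mul_right (qden a (n+1)) h1
            omega
        _ = qden a (n+2) := rfl

lemma qden_mono (a : ℕ → ℕ+) : Monotone (qden a) :=
  monotone_nat_of_le_succ (qden_le_succ a)

lemma det (a : ℕ → ℕ+) : ∀ n, (pnum a (n+1) : ℤ) * qden a n - (pnum a n : ℤ) * qden a (n+1) = (-1)^n
  | 0 => by simp [pnum, qden]
  | (n+1) => by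
      have ih := det a n
      simp only [pnum, qden]
      push_cast
      ring_nf
      ring_nf at ih
      linarith

end CFAux

namespace CFAux

lemma qdenR_pos (a : ℕ → ℕ+) (n : ℕ) : (0:ℝ) < qden a n := by
  exact_mod_cast qden_pos a n

lemma conv_succ_sub (a : ℕ → ℕ+) (n : ℕ) :
    conv a (n+1) - conv a n = (-1)^n / ((qden a n : ℝ) * (qden a (n+1))) := by
  have h0 := qdenR_pos a n
  have h1 := qdenR_pos a (n+1)
  have hd : (pnum a (n+1) : ℝ) * qden a n - (pnum a n : ℝ) * qden a (n+1) = (-1)^n := by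
    exact_mod_cast det a n
  unfold conv
  rw [div_sub_div _ _ h1.ne' h0.ne', ← hd]; ring

lemma mem_uIcc_of_eq_add_smul (u v c : ℝ) (h0 : 0 ≤ c) (h1 : c ≤ 1) :
    u + c * (v - u) ∈ Set.uIcc u v := by
  rcases le_total u v with h | h
  · rw [Set.uIcc_of_le h, Set.mem_Icc]
    constructor <;> nlinarith
  · rw [Set.uIcc_of_ge h, Set.mem_Icc]
    constructor <;> nlinarith

lemma conv_succ_succ_mem (a : ℕ → ℕ+) (n : ℕ) :
    conv a (n+2) ∈ Set.uIcc (conv a n) (conv a (n+1)) := by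
  have h0 := qdenR_pos a n
  have h1 := qdenR_pos a (n+1)
  have h2 := qdenR_pos a (n+2)
  have e1 := conv_succ_sub a n
  have e2 := conv_succ_sub a (n+1)
  have key : conv a (n+2) = conv a n + (1 - qden a n / qden a (n+2)) * (conv a (n+1) - conv a n) := by
    have : conv a (n+2) - conv a (n+1) = -(qden a n / qden a (n+2)) * (conv a (n+1) - conv a n) := by
      rw [e1, e2]
      rw [pow_succ]
      field_simp
    linarith
  rw [key]
  apply mem_uIcc_of_eq_add_smul
  · have hle : (qden a n : ℝ) ≤ qden a (n+2) := by
      exact_mod_cast qden_mono a (by omega : n ≤ n+2)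
    have := div_le_one_of_le₀ hle h2.le
    linarith
  · have : (0:ℝ) ≤ (qden a n : ℝ) / qden a (n+2) := by positivity
    linarith

lemma conv_mem_uIcc (a : ℕ → ℕ+) (n : ℕ) :
    ∀ m, n ≤ m → conv a m ∈ Set.uIcc (conv a n) (conv a (n+1)) := by
  have H : ∀ m, n ≤ m → Set.uIcc (conv a m) (conv a (m+1)) ⊆ Set.uIcc (conv a n) (conv a (n+1)) := by
    intro m hm
    induction m, hm using Nat.le_induction with
    | base => exact subset_rfl
    | succ m hm ih =>
        refine subset_trans ?_ ih
        exact Set.uIcc_subset_uIcc (Set.right_mem_uIcc) (conv_succ_succ_mem a m)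
  intro m hm
  exact H m hm (Set.left_mem_uIcc)

end CFAux

namespace CFAux

lemma qden_ge (a : ℕ → ℕ+) : ∀ n, n / 2 + 1 ≤ qden a n
  | 0 => by simp [qden]
  | 1 => by simp [qden]; exact (a 0).one_le
  | (n+2) => by
      have ih := qden_ge a n
      have h1 : 1 ≤ (a (n+1) : ℕ) := (a (n+1)).one_le
      have h2 : qden a (n+1) ≤ (a (n+1) : ℕ) * qden a (n+1) := by
        nlinarith [qden_pos a (n+1)]
      have h3 : qden a n ≤ qden a (n+1) := qden_le_succ a n
      have : qden a n + 1 ≤ qden a (n+2) := by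
        simp only [qden]; omega
      omega

lemma qden_tendsto (a : ℕ → ℕ+) :
    Tendsto (fun n => (qden a n : ℝ)) atTop atTop := by
  apply tendsto_natCast_atTop_atTop.comp
  apply tendsto_atTop_mono (fun n => qden_ge a n)
  apply Filter.tendsto_atTop_atTop.2
  intro b
  exact ⟨2 * b, fun n hn => by omega⟩

lemma width_tendsto (a : ℕ → ℕ+) :
    Tendsto (fun n => 1 / ((qden a n : ℝ) * qden a (n+1))) atTop (𝓝 0) := by
  have h : Tendsto (fun n => (qden a n : ℝ) * qden a (n+1)) atTop atTop :=
    (qden_tendsto a).atTop_mul_atTop₀ ((qden_tendsto a).comp (tendsto_add_atTop_nat 1))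
  refine h.inv_tendsto_atTop.congr fun n => ?_
  simp [one_div]

lemma dist_le_of_mem_uIcc {u v x y : ℝ} (hx : x ∈ Set.uIcc u v) (hy : y ∈ Set.uIcc u v) :
    dist x y ≤ |v - u| := by
  rw [Set.uIcc_eq_union] at hx hy
  rw [Real.dist_eq, abs_le]
  rcases hx with hx | hx <;> rcases hy with hy | hy <;>
    simp only [Set.mem_Icc] at hx hy <;>
    rcases abs_cases (v - u) with ⟨h, h'⟩ | ⟨h, h'⟩ <;>
    constructor <;> linarith

lemma conv_tendsto (a : ℕ → ℕ+) : Tendsto (conv a) atTop (𝓝 (cfVal a)) := by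
  have hc : CauchySeq (conv a) := by
    apply cauchySeq_of_le_tendsto_0 (fun n => 1 / ((qden a n : ℝ) * qden a (n+1)))
      ?_ (width_tendsto a)
    intro m k N hm hk
    have h1 := conv_mem_uIcc a N m hm
    have h2 := conv_mem_uIcc a N k hk
    calc dist (conv a m) (conv a k) ≤ |conv a (N+1) - conv a N| := dist_le_of_mem_uIcc h1 h2
      _ = 1 / ((qden a N : ℝ) * qden a (N+1)) := by
          rw [conv_succ_sub a N, abs_div, abs_pow, abs_neg, abs_one, one_pow,
            abs_of_pos (mul_pos (qdenR_pos a N) (qdenR_pos a (N+1)))]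
  obtain ⟨L, hL⟩ := cauchySeq_tendsto_of_complete hc
  have h2 : limUnder atTop (conv a) = L := hL.limUnder_eq
  show Tendsto (conv a) atTop (𝓝 (limUnder atTop (conv a)))
  rw [h2]; exact hL

lemma cfVal_mem_uIcc (a : ℕ → ℕ+) (n : ℕ) :
    cfVal a ∈ Set.uIcc (conv a n) (conv a (n+1)) := by
  have hcl : IsClosed (Set.uIcc (conv a n) (conv a (n+1))) := by
    rw [Set.uIcc]; exact isClosed_Icc
  apply hcl.mem_of_tendsto (conv_tendsto a)
  filter_upwards [eventually_ge_atTop n] with m hm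
  exact conv_mem_uIcc a n m hm

end CFAux

namespace CFAux

lemma pnum_pos (a : ℕ → ℕ+) : ∀ n, 0 < pnum a (n+1)
  | 0 => by simp [pnum]
  | (n+1) => by
      have ih := pnum_pos a n
      have h1 : 1 ≤ (a (n+1) : ℕ) := (a (n+1)).one_le
      show 0 < (a (n+1) : ℕ) * pnum a (n+1) + pnum a n
      nlinarith

lemma shift (a : ℕ → ℕ+) : ∀ n, pnum a (n+1) = qden (fun j => a (j+1)) n ∧
    qden a (n+1) = (a 0 : ℕ) * qden (fun j => a (j+1)) n + pnum (fun j => a (j+1)) n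
  | 0 => by simp [pnum, qden]
  | 1 => by simp [pnum, qden]; ring
  | (n+2) => by
      obtain ⟨ih1, ih1'⟩ := shift a (n+1)
      obtain ⟨ih2, ih2'⟩ := shift a n
      constructor
      · show (a (n+2) : ℕ) * pnum a (n+2) + pnum a (n+1) = qden _ (n+2)
        rw [ih1, ih2]; rfl
      · show (a (n+2) : ℕ) * qden a (n+2) + qden a (n+1) =
          (a 0 : ℕ) * ((a (n+2) : ℕ) * qden (fun j => a (j+1)) (n+1) + qden (fun j => a (j+1)) n)
          + ((a (n+2) : ℕ) * pnum (fun j => a (j+1)) (n+1) + pnum (fun j => a (j+1)) n)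
        rw [ih1', ih2']; ring

lemma pnum_lt_qden (a : ℕ → ℕ+) (n : ℕ) : pnum a (n+2) < qden a (n+2) := by
  obtain ⟨h1, h2⟩ := shift a (n+1)
  rw [h1, h2]
  have ha : 1 ≤ (a 0 : ℕ) := (a 0).one_le
  have hp := pnum_pos (fun j => a (j+1)) n
  have hq := qden_pos (fun j => a (j+1)) (n+1)
  nlinarith

lemma conv_pos (a : ℕ → ℕ+) (n : ℕ) : 0 < conv a (n+1) := by
  have := pnum_pos a n
  have := qden_pos a (n+1)
  apply div_pos <;> exact_mod_cast ‹_›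

lemma conv_lt_one (a : ℕ → ℕ+) (n : ℕ) : conv a (n+2) < 1 := by
  rw [conv, div_lt_one (qdenR_pos a (n+2))]
  exact_mod_cast pnum_lt_qden a n

lemma cfVal_pos (a : ℕ → ℕ+) : 0 < cfVal a := by
  have h := cfVal_mem_uIcc a 1
  rw [Set.mem_uIcc] at h
  have h1 := conv_pos a 0
  have h2 := conv_pos a 1
  rcases h with ⟨h, _⟩ | ⟨h, _⟩ <;> linarith

lemma cfVal_lt_one (a : ℕ → ℕ+) : cfVal a < 1 := by
  have h := cfVal_mem_uIcc a 2
  rw [Set.mem_uIcc] at h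
  have h1 := conv_lt_one a 0
  have h2 := conv_lt_one a 1
  rcases h with ⟨_, h⟩ | ⟨_, h⟩ <;> linarith

lemma cfVal_rec (a : ℕ → ℕ+) : cfVal a = 1 / ((a 0 : ℝ) + cfVal (fun j => a (j+1))) := by
  set a' := fun j => a (j+1) with ha'
  have hconv : ∀ n, conv a (n+1) = 1 / ((a 0 : ℝ) + conv a' n) := by
    intro n
    obtain ⟨h1, h2⟩ := shift a n
    have hq' := qdenR_pos a' n
    have hpos : (0:ℝ) < (a 0 : ℕ) * qden a' n + pnum a' n := by
      have : (0:ℕ) < (a 0 : ℕ) * qden a' n := Nat.mul_pos (a 0).pos (qden_pos a' n)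
      positivity
    have ha0 : (0:ℝ) < (a 0 : ℕ) := by exact_mod_cast (a 0).pos
    rw [conv, conv, h1, h2]
    push_cast
    rw [eq_div_iff (by positivity : (a 0 : ℕ) + (pnum a' n : ℝ) / qden a' n ≠ 0)]
    field_simp
    simp only [ha'] at hpos ⊢
    rw [div_eq_iff (by linarith)]
    ring
  have ht1 : Tendsto (fun n => conv a (n+1)) atTop (𝓝 (cfVal a)) :=
    (conv_tendsto a).comp (tendsto_add_atTop_nat 1)
  have hL' : (0:ℝ) < (a 0 : ℕ) + cfVal a' := by
    have := cfVal_pos a'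
    have ha0 : (0:ℝ) < (a 0 : ℕ) := by exact_mod_cast (a 0).pos
    linarith
  have ht2 : Tendsto (fun n => 1 / ((a 0 : ℝ) + conv a' n)) atTop
      (𝓝 (1 / ((a 0 : ℝ) + cfVal a'))) := by
    apply Tendsto.div tendsto_const_nhds
    · exact tendsto_const_nhds.add (conv_tendsto a')
    · exact ne_of_gt hL'
  have := ht1.congr (fun n => hconv n)
  exact tendsto_nhds_unique this ht2

end CFAux

namespace CFAux

lemma head_tail (a b : ℕ → ℕ+) (h : cfVal a = cfVal b) :
    a 0 = b 0 ∧ cfVal (fun j => a (j+1)) = cfVal (fun j => b (j+1)) := by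
  set s := cfVal (fun j => a (j+1)) with hs
  set t := cfVal (fun j => b (j+1)) with ht
  have hs0 := cfVal_pos (fun j => a (j+1))
  have hs1 := cfVal_lt_one (fun j => a (j+1))
  have ht0 := cfVal_pos (fun j => b (j+1))
  have ht1 := cfVal_lt_one (fun j => b (j+1))
  have ha0 : (0:ℝ) < (a 0 : ℕ) := by exact_mod_cast (a 0).pos
  have hb0 : (0:ℝ) < (b 0 : ℕ) := by exact_mod_cast (b 0).pos
  rw [cfVal_rec a, cfVal_rec b, ← hs, ← ht, div_eq_div_iff (by positivity) (by positivity)] at h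
  have heq : ((a 0 : ℕ) : ℝ) + s = ((b 0 : ℕ) : ℝ) + t := by
    push_cast at h ⊢; linarith
  have hab : (a 0 : ℕ) = (b 0 : ℕ) := by
    have h1 : ((a 0 : ℕ) : ℝ) < ((b 0 : ℕ) : ℝ) + 1 := by linarith
    have h2 : ((b 0 : ℕ) : ℝ) < ((a 0 : ℕ) : ℝ) + 1 := by linarith
    have h1' : (a 0 : ℕ) < (b 0 : ℕ) + 1 := by exact_mod_cast h1
    have h2' : (b 0 : ℕ) < (a 0 : ℕ) + 1 := by exact_mod_cast h2
    omega
  refine ⟨PNat.coe_injective hab, ?_⟩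
  have : ((a 0 : ℕ) : ℝ) = ((b 0 : ℕ) : ℝ) := by exact_mod_cast hab
  linarith

lemma cfVal_injective : Function.Injective cfVal := by
  have key : ∀ n, ∀ a b : ℕ → ℕ+, cfVal a = cfVal b → a n = b n := by
    intro n
    induction n with
    | zero => exact fun a b h => (head_tail a b h).1
    | succ n ih => exact fun a b h => ih (fun j => a (j+1)) (fun j => b (j+1)) (head_tail a b h).2
  intro a b h
  funext n
  exact key n a b h

end CFAux

namespace CFAux

lemma prefix_eq (a b : ℕ → ℕ+) (m : ℕ) (h : ∀ j < m, a j = b j) :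
    ∀ k, k ≤ m → pnum a k = pnum b k ∧ qden a k = qden b k
  | 0, _ => by simp [pnum, qden]
  | 1, hk => by
      have := h 0 (by omega)
      simp [pnum, qden, this]
  | (k+2), hk => by
      obtain ⟨p1, q1⟩ := prefix_eq a b m h (k+1) (by omega)
      obtain ⟨p2, q2⟩ := prefix_eq a b m h k (by omega)
      have hA := h (k+1) (by omega)
      constructor
      · show (a (k+1) : ℕ) * pnum a (k+1) + pnum a k = (b (k+1) : ℕ) * pnum b (k+1) + pnum b k
        rw [p1, p2, hA]
      · show (a (k+1) : ℕ) * qden a (k+1) + qden a k = (b (k+1) : ℕ) * qden b (k+1) + qden b k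
        rw [q1, q2, hA]

/-- The right endpoint of the fundamental interval of rank `k+1`. -/
noncomputable def fRight (a : ℕ → ℕ+) (k : ℕ) : ℝ :=
  ((pnum a (k+1) : ℝ) + pnum a k) / ((qden a (k+1) : ℝ) + qden a k)

lemma fRight_sub_conv (a : ℕ → ℕ+) (k : ℕ) :
    fRight a k - conv a (k+1) = (-1)^(k+1) / ((qden a (k+1) : ℝ) * ((qden a (k+1) : ℝ) + qden a k)) := by
  have hd : (pnum a (k+1) : ℝ) * qden a k - (pnum a k : ℝ) * qden a (k+1) = (-1)^k := by
    exact_mod_cast det a k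
  have h1 := qdenR_pos a k
  have h2 := qdenR_pos a (k+1)
  rw [fRight, conv, pow_succ]
  field_simp
  linear_combination (-1 : ℝ) * hd

lemma cfVal_mem_J (a : ℕ → ℕ+) (k : ℕ) :
    cfVal a ∈ Set.uIcc (conv a (k+1)) (fRight a k) := by
  have h1 := qdenR_pos a k
  have h2 := qdenR_pos a (k+1)
  have h3 := qdenR_pos a (k+2)
  have hsub : Set.uIcc (conv a (k+1)) (conv a (k+2)) ⊆ Set.uIcc (conv a (k+1)) (fRight a k) := by
    apply Set.uIcc_subset_uIcc Set.left_mem_uIcc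
    have hc : conv a (k+2) = conv a (k+1) +
        (((qden a (k+1) : ℝ) + qden a k) / qden a (k+2)) * (fRight a k - conv a (k+1)) := by
      have e2 : conv a (k+2) - conv a (k+1)
          = (-1)^(k+1) / ((qden a (k+1) : ℝ) * qden a (k+2)) := conv_succ_sub a (k+1)
      rw [fRight_sub_conv, ← sub_eq_iff_eq_add', e2]
      field_simp
    rw [hc]
    apply mem_uIcc_of_eq_add_smul
    · positivity
    · rw [div_le_one h3]
      have : (qden a (k+1) : ℕ) + qden a k ≤ qden a (k+2) := by
        have h1' : 1 ≤ (a (k+1) : ℕ) := (a (k+1)).one_le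
        show _ ≤ (a (k+1) : ℕ) * qden a (k+1) + qden a k
        nlinarith [qden_pos a (k+1)]
      exact_mod_cast this
  exact hsub (cfVal_mem_uIcc a (k+1))

lemma key_bound (a b : ℕ → ℕ+) (k : ℕ) (hab : ∀ j < k + 1, a j = b j) :
    |cfVal a - cfVal b| ≤ 1 / ((qden a (k+1) : ℝ))^2 := by
  have hpq := prefix_eq a b (k+1) hab
  obtain ⟨p1, q1⟩ := hpq (k+1) le_rfl
  obtain ⟨p2, q2⟩ := hpq k (by omega)
  have hconv : conv b (k+1) = conv a (k+1) := by rw [conv, conv, p1, q1]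
  have hfr : fRight b k = fRight a k := by rw [fRight, fRight, p1, q1, p2, q2]
  have hmb := cfVal_mem_J b k
  rw [hconv, hfr] at hmb
  have := dist_le_of_mem_uIcc (cfVal_mem_J a k) hmb
  rw [Real.dist_eq] at this
  refine this.trans ?_
  rw [fRight_sub_conv a k]
  have h1 := qdenR_pos a k
  have h2 := qdenR_pos a (k+1)
  rw [abs_div, abs_pow, abs_neg, abs_one, one_pow, abs_of_pos (by positivity)]
  rw [div_le_div_iff₀ (by positivity) (by positivity)]
  nlinarith

lemma qden_ge_prod (a : ℕ → ℕ+) : ∀ m, ∏ j ∈ Finset.range m, (a j : ℕ) ≤ qden a m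
  | 0 => by simp [qden]
  | 1 => by simp [qden]
  | (m+2) => by
      have ih := qden_ge_prod a (m+1)
      rw [Finset.prod_range_succ]
      show _ ≤ (a (m+1) : ℕ) * qden a (m+1) + qden a m
      calc (∏ j ∈ Finset.range (m+1), (a j : ℕ)) * (a (m+1) : ℕ)
          ≤ qden a (m+1) * (a (m+1) : ℕ) := Nat.mul_le_mul_right _ ih
        _ = (a (m+1) : ℕ) * qden a (m+1) := Nat.mul_comm _ _
        _ ≤ (a (m+1) : ℕ) * qden a (m+1) + qden a m := Nat.le_add_right _ _

end CFAux

namespace CFAux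

lemma coeff_eq {a : ℕ → ℕ+} {x : ℝ} (h : cfVal a = x) : coeff x = a := by
  have hex : ∃ c : ℕ → ℕ+, cfVal c = x := ⟨a, h⟩
  rw [coeff, dif_pos hex]
  exact cfVal_injective (hex.choose_spec.trans h.symm)

end CFAux

/-- If `x ∈ I` has partial quotients `a`, `n ≥ 2` is even, and `y ∈ I_n(x)`, then
`|f₁(x) − f₁(y)| ≤ 1 / (a_1² a_3² ⋯ a_{n-1}²) = ∏_{j=1}^{n/2} a_{2j-1}^{-2}`. -/
theorem abs_cantorF1_sub_le (a : ℕ → ℕ+) (x : ℝ) (hx : x ∈ Iirr) (hxa : cfVal a = x)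
    (n : ℕ) (hn : 2 ≤ n) (hne : Even n) (y : ℝ) (hy : y ∈ fundInt a n) :
    |cantorF1 x - cantorF1 y| ≤ 1 / ∏ j ∈ Finset.range (n / 2), ((a (2*j) : ℝ)) ^ 2 := by
  classical
  obtain ⟨b, hby, hbj⟩ := hy
  have hca : coeff x = a := CFAux.coeff_eq hxa
  have hcb : coeff y = b := CFAux.coeff_eq hby
  have hev : n % 2 = 0 := Nat.even_iff.mp hne
  obtain ⟨k, hk⟩ : ∃ k, n / 2 = k + 1 := ⟨n / 2 - 1, by omega⟩
  have hagree : ∀ j < k + 1, (fun j => a (2*j)) j = (fun j => b (2*j)) j := by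
    intro j hj
    have h2j : 2*j < n := by omega
    exact (hbj (2*j) h2j).symm
  have hkey := CFAux.key_bound (fun j => a (2*j)) (fun j => b (2*j)) k hagree
  rw [cantorF1, cantorF1, hca, hcb]
  refine hkey.trans ?_
  rw [← hk]
  set m := n / 2 with hm
  have hq : (∏ j ∈ Finset.range m, ((a (2*j) : ℕ))) ≤ qden (fun j => a (2*j)) m :=
    CFAux.qden_ge_prod _ m
  have hqR : (∏ j ∈ Finset.range m, ((a (2*j) : ℝ))) ≤ (qden (fun j => a (2*j)) m : ℝ) := by
    exact_mod_cast hq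
  have hpos : (0:ℝ) < ∏ j ∈ Finset.range m, ((a (2*j) : ℝ)) ^ 2 := by
    apply Finset.prod_pos
    intro j _
    have : (0:ℝ) < ((a (2*j) : ℕ) : ℝ) := by exact_mod_cast (a (2*j)).pos
    positivity
  apply one_div_le_one_div_of_le hpos
  rw [Finset.prod_pow]
  have hnn : (0:ℝ) ≤ ∏ j ∈ Finset.range m, ((a (2*j) : ℝ)) := by
    apply Finset.prod_nonneg
    intro j _
    have : (0:ℝ) < ((a (2*j) : ℕ) : ℝ) := by exact_mod_cast (a (2*j)).pos
    exact_mod_cast this.le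
  exact pow_le_pow_left₀ hnn hqR 2
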